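/- Let G be a finite simple graph, let Ĝ be a looping of G, and let 𝒜 ∈ S_znz(G) be the zero-nonzero pattern of Ĝ. Then the (loop) zero forcing number of Ĝ equals |V(G)| − tri(𝒜). -/

import Mathlib

/-!  Common definitions: zero forcing (standard, loop, positive semidefinite),
zero-nonzero patterns, triangles, and related graph parameters. -/

variable {V : Type*}

/-- Standard zero forcing rule: with filled set `S`, the filled vertex `v` can force
its unique unfilled neighbor `u`. -/
def StdForce (G : SimpleGraph V) (S : Set V) (v u : V) : Prop :=
  v ∈ S ∧ u ∉ S ∧ G.Adj v u ∧ ∀ w, G.Adj v w → w ∉ S → w = u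

/-- Adjacency in the looping of `G` with loops at the vertices in `L`
(a vertex counts as its own neighbor iff it has a loop). -/
def LoopAdj (G : SimpleGraph V) (L : Set V) (v w : V) : Prop :=
  G.Adj v w ∨ (v = w ∧ v ∈ L)

/-- Loop zero forcing rule (the forcing vertex need not be filled): `v` can force `u`
if `u` is the only unfilled neighbor of `v` in the looping. -/
def LoopForce (G : SimpleGraph V) (L : Set V) (S : Set V) (v u : V) : Prop :=
  u ∉ S ∧ LoopAdj G L v u ∧ ∀ w, LoopAdj G L v w → w ∉ S → w = u

/-- Positive semidefinite zero forcing rule: the filled vertex `v` can force the unfilled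
vertex `u` if `u` is the only neighbor of `v` in the connected component of `u` of the
subgraph induced by the unfilled vertices. -/
def PsdForce (G : SimpleGraph V) (S : Set V) (v u : V) : Prop :=
  v ∈ S ∧ u ∉ S ∧ G.Adj v u ∧
    ∀ w, G.Adj v w → w ∉ S →
      Relation.ReflTransGen (fun a b => G.Adj a b ∧ a ∉ S ∧ b ∉ S) u w → w = u

/-- The vertices performing a force in a forcing sequence. -/
def sourcesOf (seq : List (V × V)) : Set V := {v | ∃ p ∈ seq, p.1 = v}

/-- The vertices that get forced in a forcing sequence. -/
def targetsOf (seq : List (V × V)) : Set V := {u | ∃ p ∈ seq, p.2 = u}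

/-- The filled set after performing all forces of `seq` starting from `F`. -/
def filledAfter (F : Set V) (seq : List (V × V)) : Set V := F ∪ targetsOf seq

/-- `ValidSeq rule seq F`: starting with `F` as the filled set, the sequence of forces
`seq` is permitted (each force in turn is allowed by `rule`, and each vertex forces
at most once). -/
def ValidSeq (rule : Set V → V → V → Prop) : List (V × V) → Set V → Prop
  | [], _ => True
  | (v, u) :: rest, F => rule F v u ∧ (∀ p ∈ rest, p.1 ≠ v) ∧ ValidSeq rule rest (insert u F)

/-- `F` is a zero forcing set w.r.t. the forcing rule `rule`. -/
def IsZFSet (rule : Set V → V → V → Prop) (F : Set V) : Prop :=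
  ∃ seq : List (V × V), ValidSeq rule seq F ∧ filledAfter F seq = Set.univ

/-- `F` is a zero forcing set (w.r.t. `rule`) from which `R` can be the set of vertices
that force: some (automatically complete) forcing sequence from `F` fills every vertex
and the set of vertices performing a force is exactly `R`. -/
def ForcesWith (rule : Set V → V → V → Prop) (F R : Set V) : Prop :=
  ∃ seq : List (V × V), ValidSeq rule seq F ∧ filledAfter F seq = Set.univ ∧
    sourcesOf seq = R

/-- The zero forcing number w.r.t. a forcing rule. -/
noncomputable def Znum (rule : Set V → V → V → Prop) : ℕ :=
  sInf {n | ∃ F : Set V, IsZFSet rule F ∧ F.ncard = n}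

/-- The (standard) zero forcing number `Z(G)`. -/
noncomputable def Z (G : SimpleGraph V) : ℕ := Znum (StdForce G)

/-- The zero forcing number of the looping of `G` with loops at `L`. -/
noncomputable def Zloop (G : SimpleGraph V) (L : Set V) : ℕ := Znum (LoopForce G L)

/-- The positive semidefinite zero forcing number `Z₊(G)`. -/
noncomputable def Zplus (G : SimpleGraph V) : ℕ := Znum (PsdForce G)

/-- The enhanced zero forcing number `Ẑ(G)`: the maximum over all loopings of `G` of the
zero forcing number of the looping. -/
noncomputable def Zhat (G : SimpleGraph V) : ℕ := sSup {n | ∃ L : Set V, Zloop G L = n}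

/-- `F` is a direct zero forcing set for `G`: some forcing sequence from `F` fills every
vertex and every vertex that performs a force belongs to `F`. -/
def IsDirectZFSet (G : SimpleGraph V) (F : Set V) : Prop :=
  ∃ seq : List (V × V), ValidSeq (StdForce G) seq F ∧ filledAfter F seq = Set.univ ∧
    sourcesOf seq ⊆ F

/-- The direct zero forcing number `Z_d(G)`. -/
noncomputable def Zd (G : SimpleGraph V) : ℕ :=
  sInf {n | ∃ F : Set V, IsDirectZFSet G F ∧ F.ncard = n}

/-- A zero-nonzero pattern `Y` (entry `Y i j` means the `(i,j)` entry is `*`)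
has a `k × k` submatrix that is a triangle. -/
def HasTriOfSize {ρ γ : Type*} (Y : ρ → γ → Prop) (k : ℕ) : Prop :=
  ∃ (r : Fin k → ρ) (c : Fin k → γ), Function.Injective r ∧ Function.Injective c ∧
    (∀ i, Y (r i) (c i)) ∧ ∀ i j : Fin k, i < j → ¬ Y (r i) (c j)

/-- The triangle number `tri(Y)` of a zero-nonzero pattern. -/
noncomputable def tri {ρ γ : Type*} (Y : ρ → γ → Prop) : ℕ := sSup {k | HasTriOfSize Y k}

/-- Membership in `S_znz(G)`: off the diagonal, the pattern matches the adjacency of `G`. -/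
def InSznz (G : SimpleGraph V) (A : V → V → Prop) : Prop :=
  ∀ i j : V, i ≠ j → (A i j ↔ G.Adj i j)

/-- The zero-nonzero pattern of the looping of `G` with loops at `L`. -/
def loopPattern (G : SimpleGraph V) (L : Set V) : V → V → Prop :=
  fun i j => (i = j ∧ i ∈ L) ∨ (i ≠ j ∧ G.Adj i j)

/-- The submatrix of the pattern `Y` with rows `R` and columns `C` is a triangle:
there are enumerations of `R` and `C` realizing a lower-triangular pattern with `*`
diagonal (in particular `|R| = |C|`). -/
def SubIsTriangle {ρ γ : Type*} (Y : ρ → γ → Prop) (R : Finset ρ) (C : Finset γ) : Prop :=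
  ∃ (k : ℕ) (r : Fin k → ρ) (c : Fin k → γ),
    Function.Injective r ∧ Function.Injective c ∧
    (∀ x : ρ, x ∈ R ↔ ∃ i, r i = x) ∧ (∀ y : γ, y ∈ C ↔ ∃ i, c i = y) ∧
    (∀ i, Y (r i) (c i)) ∧ ∀ i j : Fin k, i < j → ¬ Y (r i) (c j)

/-- `(R, C)` is a persistent triangle of `G`. -/
def PersistentTriangle (G : SimpleGraph V) (R C : Finset V) : Prop :=
  ∀ A : V → V → Prop, InSznz G A → SubIsTriangle A R C

/-- `F` is a direct zero forcing set for `G` from which `R` can be the set of vertices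
that force. -/
def DirectForcesWith (G : SimpleGraph V) (F R : Set V) : Prop :=
  ∃ seq : List (V × V), ValidSeq (StdForce G) seq F ∧ filledAfter F seq = Set.univ ∧
    sourcesOf seq = R ∧ R ⊆ F

/-- `(range r, range c)` is a partition of `G` according to the `m × n` pattern `Y`,
with labelings given by `r` and `c`. -/
def PartitionAccording (G : SimpleGraph V) {m n : ℕ} (Y : Fin m → Fin n → Prop)
    (r : Fin m → V) (c : Fin n → V) : Prop :=
  Function.Injective r ∧ Function.Injective c ∧ (∀ i j, r i ≠ c j) ∧
    (∀ v : V, (∃ i, r i = v) ∨ (∃ j, c j = v)) ∧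
    ∀ i j, G.Adj (r i) (c j) ↔ Y i j

/-- `F` is a zero forcing set for `G` that forces from `V1` to `V2`. -/
def ForcesFromTo (G : SimpleGraph V) (F V1 V2 : Set V) : Prop :=
  V1 ⊆ F ∧ ∃ seq : List (V × V), ValidSeq (StdForce G) seq F ∧
    filledAfter F seq = Set.univ ∧ sourcesOf seq ⊆ V1 ∧ targetsOf seq ⊆ V2

/-- `(V1, V2)` is a partition of the vertex set of `G` into two cliques. -/
def IsCliquePartition (G : SimpleGraph V) (V1 V2 : Set V) : Prop :=
  Disjoint V1 V2 ∧ V1 ∪ V2 = Set.univ ∧ G.IsClique V1 ∧ G.IsClique V2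

/-- `G` is cobipartite. -/
def Cobipartite (G : SimpleGraph V) : Prop := ∃ V1 V2 : Set V, IsCliquePartition G V1 V2

/-- `G` is the cobipartite graph associated with the pattern `Y`, via labelings `r`, `c`. -/
def CobipAssociated (G : SimpleGraph V) {m n : ℕ} (Y : Fin m → Fin n → Prop)
    (r : Fin m → V) (c : Fin n → V) : Prop :=
  PartitionAccording G Y r c ∧ G.IsClique (Set.range r) ∧ G.IsClique (Set.range c)

/-- `z` is a critical vertex: some optimal forcing sequence neither lets `z` force
nor forces `z`. -/
def Critical (G : SimpleGraph V) (z : V) : Prop :=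
  ∃ (F : Set V) (seq : List (V × V)), F.ncard = Z G ∧ ValidSeq (StdForce G) seq F ∧
    filledAfter F seq = Set.univ ∧ z ∉ sourcesOf seq ∧ z ∉ targetsOf seq

/-- `z` is an uncritical vertex: in every optimal forcing sequence, exactly one of the
following holds: `z` performs a force, or `z` gets forced. -/
def Uncritical (G : SimpleGraph V) (z : V) : Prop :=
  ∀ (F : Set V) (seq : List (V × V)), F.ncard = Z G → ValidSeq (StdForce G) seq F →
    filledAfter F seq = Set.univ → (z ∈ sourcesOf seq ↔ z ∉ targetsOf seq)

/-- The maximum nullity `M(G)` over the field `𝔽`. -/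
noncomputable def Mnum (𝔽 : Type*) [Field 𝔽] [Fintype V] [DecidableEq V]
    (G : SimpleGraph V) : ℕ :=
  sSup {k | ∃ A : Matrix V V 𝔽, A.IsSymm ∧ (∀ i j : V, i ≠ j → (A i j ≠ 0 ↔ G.Adj i j)) ∧
    k = Fintype.card V - A.rank}

/-- The minimum rank `mr_𝔽(Y)` of a zero-nonzero pattern over the field `𝔽`. -/
noncomputable def mr (𝔽 : Type*) [Field 𝔽] {m n : ℕ} (Y : Fin m → Fin n → Prop) : ℕ :=
  sInf {k | ∃ A : Matrix (Fin m) (Fin n) 𝔽, (∀ i j, A i j ≠ 0 ↔ Y i j) ∧ A.rank = k}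

/-- `G` is a `k`-tree: there is a construction ordering of the vertices in which the
first `k+1` vertices form a clique and every later vertex is adjacent among the earlier
vertices to exactly a `k`-clique. -/
def IsKTree (k : ℕ) [Fintype V] (G : SimpleGraph V) : Prop :=
  k + 1 ≤ Fintype.card V ∧ ∃ ord : V ≃ Fin (Fintype.card V),
    (∀ u v : V, (ord u : ℕ) < k + 1 → (ord v : ℕ) < k + 1 → u ≠ v → G.Adj u v) ∧
    ∀ v : V, k + 1 ≤ (ord v : ℕ) →
      G.IsClique {u : V | (ord u : ℕ) < (ord v : ℕ) ∧ G.Adj u v} ∧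
      {u : V | (ord u : ℕ) < (ord v : ℕ) ∧ G.Adj u v}.ncard = k

lemma loopAdj_iff {G : SimpleGraph V} {L : Set V} {v w : V} :
    LoopAdj G L v w ↔ loopPattern G L v w := by
  constructor
  · rintro (h | ⟨rfl, hv⟩)
    · exact Or.inr ⟨h.ne, h⟩
    · exact Or.inl ⟨rfl, hv⟩
  · rintro (⟨rfl, hv⟩ | ⟨_, h⟩)
    · exact Or.inr ⟨rfl, hv⟩
    · exact Or.inl h

/-- Upper bound construction: a triangle gives a valid forcing sequence. -/
lemma upper_valid (G : SimpleGraph V) (L : Set V) :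
    ∀ (k : ℕ) (r c : Fin k → V), Function.Injective r → Function.Injective c →
    (∀ i, LoopAdj G L (r i) (c i)) → (∀ i j : Fin k, i < j → ¬ LoopAdj G L (r i) (c j)) →
    ValidSeq (LoopForce G L) (List.ofFn fun i => (r i, c i)) (Set.univ \ Set.range c) := by
  intro k
  induction k with
  | zero => intro r c _ _ _ _; simp [ValidSeq]
  | succ n ih =>
    intro r c hr hc hdiag hupper
    rw [List.ofFn_succ]
    refine ⟨?_, ?_, ?_⟩
    · refine ⟨?_, hdiag 0, ?_⟩
      · intro h; exact h.2 ⟨0, rfl⟩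
      · intro w hw hwn
        have : w ∈ Set.range c := by
          by_contra hmem; exact hwn ⟨Set.mem_univ w, hmem⟩
        obtain ⟨j, rfl⟩ := this
        rcases eq_or_ne j 0 with rfl | hj
        · rfl
        · exact absurd hw (hupper 0 j (Fin.pos_of_ne_zero hj))
    · intro p hp
      rw [List.mem_ofFn] at hp
      obtain ⟨i, rfl⟩ := hp
      simp only [ne_eq]
      intro h
      exact (Fin.succ_ne_zero i) (hr h)
    · have hset : insert (c 0) (Set.univ \ Set.range c)
          = Set.univ \ Set.range (c ∘ Fin.succ) := by
        ext w
        simp only [Set.mem_insert_iff, Set.mem_diff, Set.mem_univ, true_and,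
          Set.mem_range, Function.comp]
        constructor
        · rintro (rfl | h)
          · rintro ⟨i, hi⟩; exact (Fin.succ_ne_zero i) (hc hi)
          · rintro ⟨i, hi⟩; exact h ⟨i.succ, hi⟩
        · intro h
          by_cases h0 : w = c 0
          · exact Or.inl h0
          · refine Or.inr ?_
            rintro ⟨i, rfl⟩
            rcases Fin.eq_zero_or_eq_succ i with rfl | ⟨j, rfl⟩
            · exact h0 rfl
            · exact h ⟨j, rfl⟩
      rw [hset]
      have := ih (r ∘ Fin.succ) (c ∘ Fin.succ)
        (hr.comp (Fin.succ_injective n)) (hc.comp (Fin.succ_injective n))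
        (fun i => hdiag i.succ)
        (fun i j hij => hupper i.succ j.succ (Fin.succ_lt_succ_iff.mpr hij))
      convert this using 2
      rfl

lemma sourcesOf_cons (p : V × V) (rest : List (V × V)) :
    sourcesOf (p :: rest) = insert p.1 (sourcesOf rest) := by
  ext w; simp [sourcesOf]; tauto

lemma targetsOf_cons (p : V × V) (rest : List (V × V)) :
    targetsOf (p :: rest) = insert p.2 (targetsOf rest) := by
  ext w; simp [targetsOf]; tauto

lemma targetsOf_nil : targetsOf ([] : List (V × V)) = ∅ := by
  ext w; simp [targetsOf]

/-- Lower bound: a valid forcing sequence yields a triangle. -/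
lemma lower_aux (G : SimpleGraph V) (L : Set V) :
    ∀ (seq : List (V × V)) (F : Set V), ValidSeq (LoopForce G L) seq F →
    ∃ r c : Fin seq.length → V, Function.Injective r ∧ Function.Injective c ∧
      (∀ i, LoopAdj G L (r i) (c i)) ∧
      (∀ i j, i < j → ¬ LoopAdj G L (r i) (c j)) ∧
      Set.range r ⊆ sourcesOf seq ∧ Set.range c = targetsOf seq ∧ (∀ i, c i ∉ F) := by
  intro seq
  induction seq with
  | nil =>
    intro F _
    refine ⟨fun i => i.elim0, fun i => i.elim0, fun i => i.elim0, fun i => i.elim0,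
      fun i => i.elim0, fun i _ => i.elim0, ?_, ?_, fun i => i.elim0⟩
    · rintro w ⟨i, _⟩; exact i.elim0
    · rw [targetsOf_nil]; ext w
      constructor
      · rintro ⟨i, _⟩; exact i.elim0
      · rintro ⟨⟩
  | cons p rest ih =>
    obtain ⟨v, u⟩ := p
    intro F hvalid
    obtain ⟨hF, hdist, hrest⟩ := hvalid
    obtain ⟨r, c, hr, hc, hdiag, hupper, hrsub, hceq, hcF⟩ := ih (insert u F) hrest
    have hvnr : v ∉ Set.range r := by
      intro hv
      obtain ⟨q, hq, hq1⟩ := hrsub hv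
      exact hdist q hq hq1
    have hunc : u ∉ Set.range c := by
      rintro ⟨i, hi⟩
      exact hcF i (hi ▸ Set.mem_insert u F)
    refine ⟨Fin.cons v r, Fin.cons u c, ?_, ?_, ?_, ?_, ?_, ?_, ?_⟩
    · exact Fin.cons_injective_iff.mpr ⟨hvnr, hr⟩
    · exact Fin.cons_injective_iff.mpr ⟨hunc, hc⟩
    · intro i
      refine Fin.cases ?_ ?_ i
      · exact hF.2.1
      · intro j; simpa using hdiag j
    · intro i j hij
      refine Fin.cases ?_ ?_ i hij
      · refine Fin.cases ?_ ?_ j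
        · intro h; exact absurd h (lt_irrefl _)
        · intro j' _
          simp only [Fin.cons_zero, Fin.cons_succ]
          intro hadj
          have hcj := hcF j'
          have hne : c j' ≠ u := fun h => hcj (h ▸ Set.mem_insert u F)
          have hnF : c j' ∉ F := fun h => hcj (Set.mem_insert_of_mem u h)
          exact hne (hF.2.2 _ hadj hnF)
      · intro i'
        refine Fin.cases ?_ ?_ j
        · intro h; exact absurd h (by simp [Fin.lt_def])
        · intro j' h
          simp only [Fin.cons_succ]
          exact hupper i' j' (Fin.succ_lt_succ_iff.mp h)
    · rw [Fin.range_cons, sourcesOf_cons]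
      exact Set.insert_subset_insert hrsub
    · rw [Fin.range_cons, targetsOf_cons, hceq]
    · intro i
      refine Fin.cases ?_ ?_ i
      · exact hF.1
      · intro j
        simpa using fun h => hcF j (Set.mem_insert_of_mem u h)

/-- The zero forcing number of a looping of `G` equals
`|V(G)| − tri(𝒜)` where `𝒜` is the pattern of the looping. -/
theorem loop_zero_forcing_eq_card_sub_tri
    {V : Type*} [Fintype V] [DecidableEq V] (G : SimpleGraph V) (L : Set V) :
    Zloop G L = Fintype.card V - tri (loopPattern G L) := by
  classical
  set T := {k | HasTriOfSize (loopPattern G L) k} with hT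
  have h0 : 0 ∈ T :=
    ⟨Fin.elim0, Fin.elim0, fun i => i.elim0, fun i => i.elim0,
      fun i => i.elim0, fun i _ _ => i.elim0⟩
  have hbdd : BddAbove T := by
    refine ⟨Fintype.card V, ?_⟩
    rintro k ⟨r, c, hr, hc, -, -⟩
    simpa using Fintype.card_le_of_injective c hc
  have htdef : tri (loopPattern G L) = sSup T := rfl
  have htri_mem : tri (loopPattern G L) ∈ T := by
    rw [htdef]; exact Nat.sSup_mem ⟨0, h0⟩ hbdd
  set t := tri (loopPattern G L) with ht
  refine le_antisymm ?_ ?_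
  · -- upper bound
    obtain ⟨r, c, hr, hc, hdiag, hupper⟩ := htri_mem
    have hdiag' : ∀ i, LoopAdj G L (r i) (c i) := fun i => loopAdj_iff.mpr (hdiag i)
    have hupper' : ∀ i j : Fin t, i < j → ¬ LoopAdj G L (r i) (c j) :=
      fun i j hij h => hupper i j hij (loopAdj_iff.mp h)
    have hvalid := upper_valid G L t r c hr hc hdiag' hupper'
    have htarg : targetsOf (List.ofFn fun i => (r i, c i)) = Set.range c := by
      ext w
      simp only [targetsOf, List.mem_ofFn, Set.mem_setOf_eq, Set.mem_range]
      constructor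
      · rintro ⟨p, ⟨i, rfl⟩, rfl⟩; exact ⟨i, rfl⟩
      · rintro ⟨i, rfl⟩; exact ⟨(r i, c i), ⟨i, rfl⟩, rfl⟩
    have hfill : filledAfter (Set.univ \ Set.range c) (List.ofFn fun i => (r i, c i))
        = Set.univ := by
      rw [filledAfter, htarg, Set.diff_union_of_subset (Set.subset_univ _)]
    have hrange : (Set.range c).ncard = t := by
      rw [← Nat.card_coe_set_eq]
      simpa using Nat.card_range_of_injective hc
    have hncard : (Set.univ \ Set.range c).ncard = Fintype.card V - t := by
      rw [Set.ncard_diff (Set.subset_univ _), Set.ncard_univ, hrange, Nat.card_eq_fintype_card]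
    exact Nat.sInf_le ⟨Set.univ \ Set.range c, ⟨_, hvalid, hfill⟩, hncard⟩
  · -- lower bound
    refine le_csInf ?_ ?_
    · refine ⟨(Set.univ : Set V).ncard, Set.univ, ⟨[], trivial, ?_⟩, rfl⟩
      rw [filledAfter, Set.univ_union]
    · rintro n ⟨F, ⟨seq, hvalid, hfill⟩, rfl⟩
      obtain ⟨r, c, hr, hc, hdiag, hupper, -, hceq, -⟩ := lower_aux G L seq F hvalid
      have hmem : seq.length ∈ T :=
        ⟨r, c, hr, hc, fun i => loopAdj_iff.mp (hdiag i),
          fun i j hij h => hupper i j hij (loopAdj_iff.mpr h)⟩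
      have hlen : seq.length ≤ t := htdef ▸ le_csSup hbdd hmem
      have htargn : (targetsOf seq).ncard = seq.length := by
        rw [← hceq, ← Nat.card_coe_set_eq]
        simpa using Nat.card_range_of_injective hc
      have hcard : Fintype.card V ≤ F.ncard + seq.length := by
        calc Fintype.card V = (Set.univ : Set V).ncard := by rw [Set.ncard_univ, Nat.card_eq_fintype_card]
          _ = (F ∪ targetsOf seq).ncard := by rw [← hfill]; rfl
          _ ≤ F.ncard + (targetsOf seq).ncard := Set.ncard_union_le _ _
          _ = F.ncard + seq.length := by rw [htargn]
      omega
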